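/- Let n ∈ ℕ* and 0 < ε ≤ 1. Let E and F be normed vector spaces and U ⊆ E an open convex subset. Let f : U → F be n times continuously differentiable with successive derivatives f¹, …, fⁿ. Then f is almost Lip-(n+ε) on U (i.e. almost Lipschitz of degree n+ε on domains of size δ = ∞) if and only if the collection (f¹, f², …, fⁿ) is Lip-(n+ε−1) on U, and in that case ‖f‖_{∞,Lip-(n+ε)} = ‖f¹‖_{Lip-(n+ε−1)}. -/

import Mathlib

open Metric Set

noncomputable section

/-- The Taylor remainder of order `k` associated to the collection
`f = (f⁰, f¹, …, fⁿ)` (each `fᵏ` viewed as a continuous `k`-linear map),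
evaluated at the elementary tensor `v₁ ⊗ ⋯ ⊗ v_k`:
`Rₖ(x,y)(v) = fᵏ(x)(v) - ∑_{j=k}^{n} fʲ(y)(v ⊗ (x-y)^{⊗(j-k)}/(j-k)!)`. -/
def lipRemainder {E F : Type*} [NormedAddCommGroup E] [NormedSpace ℝ E]
    [NormedAddCommGroup F] [NormedSpace ℝ F]
    (n : ℕ) (f : ∀ k : ℕ, E → ContinuousMultilinearMap ℝ (fun _ : Fin k => E) F)
    (k : ℕ) (x y : E) (v : Fin k → E) : F :=
  f k x v - ∑ j ∈ Finset.range (n - k + 1),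
    ((j.factorial : ℝ)⁻¹) • f (k + j) y (Fin.append v fun _ : Fin j => x - y)

/-- The collection `(f^{k₀}, …, fⁿ)` satisfies the `Lip-γ` bounds with constant `M`
on `U`: each `fᵏ` is bounded by `M` (as a multilinear map) and each remainder of
order `k` is bounded by `M ‖x-y‖^{γ-k}` (times the norm of the tensor).
Taking `k₀ = 0` gives the usual notion of a `Lip-γ` collection; taking `k₀ = 1`
expresses that the shifted collection `(f¹, …, fⁿ)` is `Lip-(γ-1)`. -/
def IsLipCollBetween {E F : Type*} [NormedAddCommGroup E] [NormedSpace ℝ E]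
    [NormedAddCommGroup F] [NormedSpace ℝ F]
    (γ : ℝ) (k₀ n : ℕ) (M : ℝ)
    (f : ∀ k : ℕ, E → ContinuousMultilinearMap ℝ (fun _ : Fin k => E) F)
    (U : Set E) : Prop :=
  (∀ k, k₀ ≤ k → k ≤ n → ∀ x ∈ U, ∀ v : Fin k → E,
      ‖f k x v‖ ≤ M * ∏ i, ‖v i‖) ∧
  (∀ k, k₀ ≤ k → k ≤ n → ∀ x ∈ U, ∀ y ∈ U, ∀ v : Fin k → E,
      ‖lipRemainder n f k x y v‖ ≤ M * ‖x - y‖ ^ (γ - k) * ∏ i, ‖v i‖)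

/-- Each member of the collection takes values in the symmetric multilinear maps. -/
def IsSymmColl {E F : Type*} [NormedAddCommGroup E] [NormedSpace ℝ E]
    [NormedAddCommGroup F] [NormedSpace ℝ F]
    (n : ℕ)
    (f : ∀ k : ℕ, E → ContinuousMultilinearMap ℝ (fun _ : Fin k => E) F)
    (U : Set E) : Prop :=
  ∀ k, k ≤ n → ∀ x ∈ U, ∀ (σ : Equiv.Perm (Fin k)) (v : Fin k → E),
    f k x (v ∘ σ) = f k x v

private lemma castApply {E F : Type*} [NormedAddCommGroup E] [NormedSpace ℝ E]
    [NormedAddCommGroup F] [NormedSpace ℝ F]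
    (f : ∀ k : ℕ, E → ContinuousMultilinearMap ℝ (fun _ : Fin k => E) F)
    (y : E) {a b : ℕ} (h : a = b) (v : Fin b → E) : f a y (v ∘ Fin.cast h) = f b y v := by
  subst h; simp

private lemma remainderTop {E F : Type*} [NormedAddCommGroup E] [NormedSpace ℝ E]
    [NormedAddCommGroup F] [NormedSpace ℝ F]
    (n : ℕ) (f : ∀ k : ℕ, E → ContinuousMultilinearMap ℝ (fun _ : Fin k => E) F)
    (x y : E) (v : Fin n → E) :
    lipRemainder n f n x y v = f n x v - f n y v := by
  have h0 : (fun _ : Fin 0 => x - y) = Fin.elim0 := funext fun i => i.elim0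
  rw [lipRemainder]
  rw [Nat.sub_self]
  rw [Finset.sum_range_one]
  rw [h0, Fin.append_elim0]
  simp [castApply f y (Nat.add_zero n) v]

private lemma keyBound {E F : Type*} [NormedAddCommGroup E] [NormedSpace ℝ E]
    [NormedAddCommGroup F] [NormedSpace ℝ F]
    (n : ℕ) (hn : 1 ≤ n) (ε γ : ℝ) (hε0 : 0 < ε) (hε1 : ε ≤ 1) (hγ : γ = n + ε)
    (U : Set E) (hconv : Convex ℝ U)
    (f : ∀ k : ℕ, E → ContinuousMultilinearMap ℝ (fun _ : Fin k => E) F)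
    (hdiff : HasFTaylorSeriesUpToOn (n : ℕ) (fun x => f 0 x 0) (fun x k => f k x) U)
    (M : ℝ) (hM : 0 ≤ M)
    (hcoll : IsLipCollBetween γ 1 n M f U)
    {x y : E} (hx : x ∈ U) (hy : y ∈ U) :
    ‖lipRemainder n f 0 x y 0‖ ≤ M * ‖x - y‖ ^ γ := by
  set c : ℝ → E := fun t => y + t • (x - y) with hc_def
  have hcU : ∀ t ∈ Icc (0:ℝ) 1, c t ∈ U := by
    intro t ht
    have h := hconv hy hx (sub_nonneg.2 ht.2) ht.1 (by ring)
    have : c t = (1 - t) • y + t • x := by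
      simp only [hc_def]; module
    rw [this]; exact h
  have hmap : MapsTo c (Icc (0:ℝ) 1) U := fun t ht => hcU t ht
  have hcder : ∀ t : ℝ, HasDerivWithinAt c (x - y) (Icc (0:ℝ) 1) t := by
    intro t
    have : HasDerivAt c ((1:ℝ) • (x - y)) t :=
      ((hasDerivAt_id t).smul_const (x - y)).const_add y
    simpa using this.hasDerivWithinAt
  set g : ℕ → ℝ → F := fun j t => f j (c t) (fun _ => x - y) with hg_def
  set Cn : F := f n y (fun _ : Fin n => x - y) with hCn_def
  set G : ℝ → F := fun t =>
    (∑ j ∈ Finset.range n, (((j.factorial : ℝ))⁻¹ * (1 - t) ^ j) • g j t)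
      + (((n.factorial : ℝ))⁻¹ * (1 - t) ^ n) • Cn with hG_def
  -- derivative of g j
  have hgder : ∀ j, j < n → ∀ t ∈ Icc (0:ℝ) 1,
      HasDerivWithinAt (g j) (g (j+1) t) (Icc (0:ℝ) 1) t := by
    intro j hj t ht
    have h1 : HasFDerivWithinAt (fun z => f j z) (f (j+1) (c t)).curryLeft U (c t) :=
      hdiff.fderivWithin j (by exact_mod_cast hj) (c t) (hcU t ht)
    have h2 : HasDerivWithinAt (fun u => f j (c u)) ((f (j+1) (c t)).curryLeft (x - y))
        (Icc (0:ℝ) 1) t := h1.comp_hasDerivWithinAt t (hcder t) hmap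
    have h3 := (ContinuousMultilinearMap.apply ℝ (fun _ : Fin j => E) F
      (fun _ => x - y)).hasFDerivAt.comp_hasDerivWithinAt t h2
    have h4 : (Fin.cons (x - y) (fun _ : Fin j => x - y) : Fin (j+1) → E) = fun _ => x - y := by
      funext i; refine Fin.cases ?_ ?_ i <;> simp
    simp only [ContinuousMultilinearMap.apply_apply, Function.comp_def,
      ContinuousMultilinearMap.curryLeft_apply, h4] at h3
    exact h3
  -- derivative of G
  have hGder : ∀ t ∈ Icc (0:ℝ) 1,
      HasDerivWithinAt G
        (((n : ℝ) * ((n.factorial : ℝ))⁻¹ * (1 - t) ^ (n - 1)) • (g n t - Cn))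
        (Icc (0:ℝ) 1) t := by
    intro t ht
    have hader : ∀ j : ℕ, HasDerivWithinAt
        (fun u : ℝ => ((j.factorial : ℝ))⁻¹ * (1 - u) ^ j)
        (((j.factorial : ℝ))⁻¹ * ((j:ℝ) * (1 - t) ^ (j - 1) * (-1))) (Icc (0:ℝ) 1) t := by
      intro j
      exact ((((hasDerivAt_id t).const_sub 1).pow j).const_mul
        ((j.factorial : ℝ))⁻¹).hasDerivWithinAt
    have hterm : ∀ j, j < n → HasDerivWithinAt
        (fun u => (((j.factorial : ℝ))⁻¹ * (1 - u) ^ j) • g j u)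
        ((((j.factorial : ℝ))⁻¹ * (1 - t) ^ j) • g (j+1) t
          + (((j.factorial : ℝ))⁻¹ * ((j:ℝ) * (1 - t) ^ (j - 1) * (-1))) • g j t)
        (Icc (0:ℝ) 1) t := fun j hj => (hader j).smul (hgder j hj t ht)
    have hsum := HasDerivWithinAt.sum (u := Finset.range n)
      (fun j hj => hterm j (Finset.mem_range.1 hj))
    have hlast : HasDerivWithinAt
        (fun u : ℝ => (((n.factorial : ℝ))⁻¹ * (1 - u) ^ n) • Cn)
        ((((n.factorial : ℝ))⁻¹ * ((n:ℝ) * (1 - t) ^ (n - 1) * (-1))) • Cn)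
        (Icc (0:ℝ) 1) t := (hader n).smul_const Cn
    have htot := hsum.add hlast
    have heq : (∑ j ∈ Finset.range n,
        ((((j.factorial : ℝ))⁻¹ * (1 - t) ^ j) • g (j+1) t
          + (((j.factorial : ℝ))⁻¹ * ((j:ℝ) * (1 - t) ^ (j - 1) * (-1))) • g j t))
        + (((n.factorial : ℝ))⁻¹ * ((n:ℝ) * (1 - t) ^ (n - 1) * (-1))) • Cn
        = ((n : ℝ) * ((n.factorial : ℝ))⁻¹ * (1 - t) ^ (n - 1)) • (g n t - Cn) := by
      set vv : ℕ → F := fun j => ((j : ℝ) * ((j.factorial : ℝ))⁻¹ * (1 - t) ^ (j - 1)) • g j t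
        with hvv_def
      have hstep : ∀ j ∈ Finset.range n,
          ((((j.factorial : ℝ))⁻¹ * (1 - t) ^ j) • g (j+1) t
            + (((j.factorial : ℝ))⁻¹ * ((j:ℝ) * (1 - t) ^ (j - 1) * (-1))) • g j t)
          = vv (j+1) - vv j := by
        intro j _
        have hfact : ((j:ℝ) + 1) * (((j+1).factorial : ℝ))⁻¹ = ((j.factorial : ℝ))⁻¹ := by
          rw [Nat.factorial_succ]
          push_cast
          rw [mul_inv]
          rw [← mul_assoc, mul_inv_cancel₀ (by positivity), one_mul]
        simp only [hvv_def, Nat.add_sub_cancel, Nat.cast_add, Nat.cast_one]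
        rw [hfact]
        have hc2 : ((j.factorial : ℝ))⁻¹ * ((j:ℝ) * (1 - t) ^ (j - 1) * (-1))
            = -((j:ℝ) * ((j.factorial : ℝ))⁻¹ * (1 - t) ^ (j - 1)) := by ring
        rw [hc2, neg_smul]
        abel
      rw [Finset.sum_congr rfl hstep, Finset.sum_range_sub vv]
      have hvv0 : vv 0 = 0 := by simp [hvv_def]
      rw [hvv0, sub_zero, hvv_def]
      rw [smul_sub]
      have : ((n.factorial : ℝ))⁻¹ * ((n:ℝ) * (1 - t) ^ (n - 1) * (-1))
          = -((n:ℝ) * ((n.factorial : ℝ))⁻¹ * (1 - t) ^ (n - 1)) := by ring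
      rw [this, neg_smul]
      abel
    rw [← heq]
    convert htot using 1
    ext u
    simp only [hG_def, Pi.add_apply, Finset.sum_apply]
  -- endpoint values
  have hc1 : c 1 = x := by simp [hc_def]
  have hc0 : c 0 = y := by simp [hc_def]
  have hG1 : G 1 = f 0 x 0 := by
    have hsum1 : ∀ j ∈ Finset.range n, j ≠ 0 →
        (((j.factorial : ℝ))⁻¹ * (1 - (1:ℝ)) ^ j) • g j 1 = 0 := by
      intro j _ hj0
      rw [sub_self, zero_pow hj0, mul_zero, zero_smul]
    rw [hG_def]
    simp only
    rw [Finset.sum_eq_single_of_mem 0 (Finset.mem_range.2 hn) (fun j hj hj0 => hsum1 j hj hj0)]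
    rw [sub_self, zero_pow (by omega : n ≠ 0), mul_zero, zero_smul, add_zero]
    simp only [pow_zero, Nat.factorial_zero, Nat.cast_one, inv_one, one_mul, one_smul,
      hg_def, hc1]
    congr 1
    exact Subsingleton.elim _ _
  have hG0 : G 0 = ∑ j ∈ Finset.range (n+1),
      ((j.factorial : ℝ))⁻¹ • f j y (fun _ : Fin j => x - y) := by
    rw [hG_def]
    simp only [sub_zero, one_pow, mul_one, hg_def, hc0, hCn_def]
    rw [Finset.sum_range_succ]
  have hR : lipRemainder n f 0 x y 0 = G 1 - G 0 := by
    rw [hG1, hG0, lipRemainder]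
    congr 1
    refine Finset.sum_congr (by norm_num) fun j _ => ?_
    have h0 : (Fin.append (0 : Fin 0 → E) (fun _ : Fin j => x - y)) =
        (fun _ : Fin j => x - y) ∘ Fin.cast (Nat.zero_add j) := by
      have : (0 : Fin 0 → E) = Fin.elim0 := funext fun i => i.elim0
      rw [this, Fin.elim0_append]
    rw [h0, castApply f y (Nat.zero_add j)]
  have hne : ε + (n:ℝ) ≠ 0 := by
    have h0n : (0:ℝ) ≤ (n:ℝ) := Nat.cast_nonneg n
    intro h; linarith
  -- the bound on the derivative
  have hbound : ∀ t ∈ Ico (0:ℝ) 1,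
      ‖((n : ℝ) * ((n.factorial : ℝ))⁻¹ * (1 - t) ^ (n - 1)) • (g n t - Cn)‖
        ≤ M * ‖x - y‖ ^ γ := by
    intro t ht
    have ht' : t ∈ Icc (0:ℝ) 1 := Ico_subset_Icc_self ht
    have h1t : (0:ℝ) ≤ 1 - t := by linarith [ht'.2]
    have hcoef : (0:ℝ) ≤ (n : ℝ) * ((n.factorial : ℝ))⁻¹ * (1 - t) ^ (n - 1) :=
      mul_nonneg (mul_nonneg (Nat.cast_nonneg n) (by positivity)) (pow_nonneg h1t _)
    have hcoef1 : (n : ℝ) * ((n.factorial : ℝ))⁻¹ * (1 - t) ^ (n - 1) ≤ 1 := by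
      have h1 : (n : ℝ) * ((n.factorial : ℝ))⁻¹ ≤ 1 := by
        rw [← div_eq_mul_inv, div_le_one (by exact_mod_cast n.factorial_pos)]
        exact_mod_cast Nat.self_le_factorial n
      have h2 : (1 - t) ^ (n - 1) ≤ 1 :=
        pow_le_one₀ (by linarith [ht'.2]) (by linarith [ht'.1])
      calc (n : ℝ) * ((n.factorial : ℝ))⁻¹ * (1 - t) ^ (n - 1)
          ≤ 1 * 1 := mul_le_mul h1 h2 (pow_nonneg h1t _) (by linarith)
        _ = 1 := by ring
    have hrem : g n t - Cn = lipRemainder n f n (c t) y (fun _ => x - y) := by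
      rw [remainderTop]
    have hr2 := hcoll.2 n hn le_rfl (c t) (hcU t ht') y hy (fun _ => x - y)
    have hprod : (∏ _i : Fin n, ‖x - y‖) = ‖x - y‖ ^ n := by
      simp [Finset.prod_const]
    have hcty : ‖c t - y‖ ≤ ‖x - y‖ := by
      have : c t - y = t • (x - y) := by simp [hc_def]
      rw [this, norm_smul, Real.norm_eq_abs, abs_of_nonneg ht'.1]
      calc t * ‖x - y‖ ≤ 1 * ‖x - y‖ :=
            mul_le_mul_of_nonneg_right ht'.2 (norm_nonneg _)
        _ = ‖x - y‖ := one_mul _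
    have hεeq : γ - (n : ℝ) = ε := by rw [hγ]; ring
    have hmono : ‖c t - y‖ ^ (γ - (n:ℕ)) ≤ ‖x - y‖ ^ ε := by
      push_cast
      rw [hεeq]
      exact Real.rpow_le_rpow (norm_nonneg _) hcty hε0.le
    have hfinal : ‖lipRemainder n f n (c t) y (fun _ => x - y)‖ ≤ M * ‖x - y‖ ^ γ := by
      calc ‖lipRemainder n f n (c t) y (fun _ => x - y)‖
          ≤ M * ‖c t - y‖ ^ (γ - (n:ℕ)) * ∏ _i : Fin n, ‖x - y‖ := hr2
        _ ≤ M * (‖x - y‖ ^ ε) * ‖x - y‖ ^ n := by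
            rw [hprod]
            exact mul_le_mul_of_nonneg_right
              (mul_le_mul_of_nonneg_left hmono hM) (by positivity)
        _ = M * ‖x - y‖ ^ γ := by
            rw [mul_assoc, ← Real.rpow_natCast ‖x - y‖ n,
              ← Real.rpow_add' (norm_nonneg _) hne, hγ, add_comm]
    rw [norm_smul, Real.norm_eq_abs, abs_of_nonneg hcoef, hrem]
    calc ((n : ℝ) * ((n.factorial : ℝ))⁻¹ * (1 - t) ^ (n - 1))
          * ‖lipRemainder n f n (c t) y (fun _ => x - y)‖
        ≤ 1 * (M * ‖x - y‖ ^ γ) :=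
          mul_le_mul hcoef1 hfinal (norm_nonneg _) (by norm_num)
      _ = M * ‖x - y‖ ^ γ := one_mul _
  rw [hR]
  exact norm_image_sub_le_of_norm_deriv_le_segment_01' hGder hbound

/-- **Criterion for almost Lipschitz maps on open convex sets** (Lemma 2.7).
Let `γ = n + ε` with `n ≥ 1`, `U` open and convex, and let `f⁰` be `n` times
continuously differentiable on `U` with successive derivatives `f¹,…,fⁿ`
(expressed via `HasFTaylorSeriesUpToOn`).  Then `f` is almost Lip-γ on `U`
(i.e. the shifted collection `(f¹,…,fⁿ)` is Lip-(γ-1) and the order-0 remainder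
`R₀` is bounded by `M‖x-y‖^γ`) iff `(f¹,…,fⁿ)` is Lip-(γ-1) on `U`;
moreover the norms coincide: any constant for `(f¹,…,fⁿ)` is also a constant
for the remainder `R₀`. -/
theorem statement5 {E F : Type*} [NormedAddCommGroup E] [NormedSpace ℝ E]
    [NormedAddCommGroup F] [NormedSpace ℝ F]
    (n : ℕ) (hn : 1 ≤ n) (ε γ : ℝ) (hε0 : 0 < ε) (hε1 : ε ≤ 1) (hγ : γ = n + ε)
    (U : Set E) (hU : IsOpen U) (hconv : Convex ℝ U)
    (f : ∀ k : ℕ, E → ContinuousMultilinearMap ℝ (fun _ : Fin k => E) F)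
    (hsymm : IsSymmColl n f U)
    (hdiff : HasFTaylorSeriesUpToOn (n : ℕ) (fun x => f 0 x 0) (fun x k => f k x) U) :
    ((∃ M : ℝ, 0 ≤ M ∧ IsLipCollBetween γ 1 n M f U ∧
        ∀ x ∈ U, ∀ y ∈ U, ‖lipRemainder n f 0 x y 0‖ ≤ M * ‖x - y‖ ^ γ) ↔
      (∃ M : ℝ, 0 ≤ M ∧ IsLipCollBetween γ 1 n M f U)) ∧
    (∀ M : ℝ, 0 ≤ M → IsLipCollBetween γ 1 n M f U →
      ∀ x ∈ U, ∀ y ∈ U, ‖lipRemainder n f 0 x y 0‖ ≤ M * ‖x - y‖ ^ γ) := by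
  have key : ∀ M : ℝ, 0 ≤ M → IsLipCollBetween γ 1 n M f U →
      ∀ x ∈ U, ∀ y ∈ U, ‖lipRemainder n f 0 x y 0‖ ≤ M * ‖x - y‖ ^ γ :=
    fun M hM hcoll x hx y hy =>
      keyBound n hn ε γ hε0 hε1 hγ U hconv f hdiff M hM hcoll hx hy
  refine ⟨⟨fun ⟨M, hM, hcoll, _⟩ => ⟨M, hM, hcoll⟩,
    fun ⟨M, hM, hcoll⟩ => ⟨M, hM, hcoll, key M hM hcoll⟩⟩, key⟩

end
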